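/- Fix p with 0 < p < 1/2 and define ρ_k by ρ_0 = 1 and ρ_{k+1} = 2p·ρ_k − (p·ρ_k)². Then for all n and all k with 1 ≤ k ≤ n, α^{(n)}_k ≤ p·ρ_k/(1 − 2p), where α^{(n)}_k = (1−p)·p·Σ_{i=0}^{n−1−k} (1−p)^i · ρ_{k+i} · ∏_{j=0}^{i−1} (1 − p·ρ_{k+j}). -/
import Mathlib


open Filter Finset

/-- The recursion `ρ₀ = 1`, `ρ_{k+1} = 2 p ρ_k - (p ρ_k)²`. -/
noncomputable def rho (p : ℝ) : ℕ → ℝ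
  | 0 => 1
  | k + 1 => 2 * p * rho p k - (p * rho p k) ^ 2

/-- `α^{(n)}_k`, the probability that water reaches a level-`k` vertex from below. -/
noncomputable def alpha (p : ℝ) (n k : ℕ) : ℝ :=
  (1 - p) * p * ∑ i ∈ Finset.range (n - k),
    (1 - p) ^ i * rho p (k + i) * ∏ j ∈ Finset.range i, (1 - p * rho p (k + j))

lemma rho_mem (p : ℝ) (hp0 : 0 < p) (hp1 : p < 1 / 2) (k : ℕ) :
    0 ≤ rho p k ∧ rho p k ≤ 1 := by
  induction k with
  | zero => simp [rho]
  | succ k ih =>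
    obtain ⟨h0, h1⟩ := ih
    have hpr0 : 0 ≤ p * rho p k := mul_nonneg hp0.le h0
    have hpr1 : p * rho p k ≤ 1 := by nlinarith
    constructor
    · show 0 ≤ 2 * p * rho p k - (p * rho p k) ^ 2
      nlinarith
    · show 2 * p * rho p k - (p * rho p k) ^ 2 ≤ 1
      nlinarith

lemma rho_le_pow (p : ℝ) (hp0 : 0 < p) (hp1 : p < 1 / 2) (k i : ℕ) :
    rho p (k + i) ≤ (2 * p) ^ i * rho p k := by
  induction i with
  | zero => simp
  | succ i ih =>
    have h := rho_mem p hp0 hp1 (k + i)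
    have h2p : (0:ℝ) ≤ 2 * p := by linarith
    calc rho p (k + (i + 1)) = 2 * p * rho p (k + i) - (p * rho p (k + i)) ^ 2 := by
          rw [show k + (i + 1) = (k + i) + 1 from rfl]; rfl
      _ ≤ 2 * p * rho p (k + i) := by nlinarith [sq_nonneg (p * rho p (k + i))]
      _ ≤ 2 * p * ((2 * p) ^ i * rho p k) := by nlinarith
      _ = (2 * p) ^ (i + 1) * rho p k := by ring

theorem alpha_le (p : ℝ) (hp0 : 0 < p) (hp1 : p < 1 / 2)
    (n k : ℕ) (hk1 : 1 ≤ k) (hkn : k ≤ n) :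
    alpha p n k ≤ p * rho p k / (1 - 2 * p) := by
  have h2p : 0 < 1 - 2 * p := by linarith
  have hrk := rho_mem p hp0 hp1 k
  -- bound each term
  have hterm : ∀ i ∈ Finset.range (n - k),
      (1 - p) ^ i * rho p (k + i) * ∏ j ∈ Finset.range i, (1 - p * rho p (k + j))
        ≤ (2 * p) ^ i * rho p k := by
    intro i _
    have hprod0 : 0 ≤ ∏ j ∈ Finset.range i, (1 - p * rho p (k + j)) :=
      Finset.prod_nonneg fun j _ => by
        have h := rho_mem p hp0 hp1 (k + j); nlinarith
    have hprod1 : ∏ j ∈ Finset.range i, (1 - p * rho p (k + j)) ≤ 1 :=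
      Finset.prod_le_one (fun j _ => by
        have h := rho_mem p hp0 hp1 (k + j); nlinarith)
        (fun j _ => by have h := rho_mem p hp0 hp1 (k + j); nlinarith)
    have hpow1 : (1 - p) ^ i ≤ 1 :=
      pow_le_one₀ (by linarith) (by linarith)
    have hpow0 : (0:ℝ) ≤ (1 - p) ^ i := pow_nonneg (by linarith) i
    have hri := rho_mem p hp0 hp1 (k + i)
    calc (1 - p) ^ i * rho p (k + i) * ∏ j ∈ Finset.range i, (1 - p * rho p (k + j))
        ≤ 1 * rho p (k + i) * 1 := by
          apply mul_le_mul (mul_le_mul hpow1 le_rfl hri.1 zero_le_one) hprod1 hprod0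
          nlinarith
      _ = rho p (k + i) := by ring
      _ ≤ (2 * p) ^ i * rho p k := rho_le_pow p hp0 hp1 k i
  have hsum : ∑ i ∈ Finset.range (n - k),
      (1 - p) ^ i * rho p (k + i) * ∏ j ∈ Finset.range i, (1 - p * rho p (k + j))
        ≤ rho p k / (1 - 2 * p) := by
    calc _ ≤ ∑ i ∈ Finset.range (n - k), (2 * p) ^ i * rho p k :=
          Finset.sum_le_sum hterm
      _ = (∑ i ∈ Finset.range (n - k), (2 * p) ^ i) * rho p k := by
          rw [Finset.sum_mul]
      _ ≤ (1 - 2 * p)⁻¹ * rho p k := by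
          apply mul_le_mul_of_nonneg_right _ hrk.1
          have := geom_sum_Ico_le_of_lt_one (show (0:ℝ) ≤ 2 * p by linarith)
            (show 2 * p < 1 by linarith) (m := 0) (n := n - k)
          rw [Finset.range_eq_Ico]
          simpa [one_div] using this
      _ = rho p k / (1 - 2 * p) := by rw [div_eq_inv_mul]
  have hsum0 : 0 ≤ ∑ i ∈ Finset.range (n - k),
      (1 - p) ^ i * rho p (k + i) * ∏ j ∈ Finset.range i, (1 - p * rho p (k + j)) := by
    apply Finset.sum_nonneg
    intro i _
    have hri := rho_mem p hp0 hp1 (k + i)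
    have hprod0 : 0 ≤ ∏ j ∈ Finset.range i, (1 - p * rho p (k + j)) :=
      Finset.prod_nonneg fun j _ => by
        have h := rho_mem p hp0 hp1 (k + j); nlinarith
    have hpow0 : (0:ℝ) ≤ (1 - p) ^ i := pow_nonneg (by linarith) i
    exact mul_nonneg (mul_nonneg hpow0 hri.1) hprod0
  unfold alpha
  calc (1 - p) * p * ∑ i ∈ Finset.range (n - k),
        (1 - p) ^ i * rho p (k + i) * ∏ j ∈ Finset.range i, (1 - p * rho p (k + j))
      ≤ 1 * p * ∑ i ∈ Finset.range (n - k),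
        (1 - p) ^ i * rho p (k + i) * ∏ j ∈ Finset.range i, (1 - p * rho p (k + j)) := by
        apply mul_le_mul_of_nonneg_right _ hsum0
        nlinarith
    _ = p * ∑ i ∈ Finset.range (n - k),
        (1 - p) ^ i * rho p (k + i) * ∏ j ∈ Finset.range i, (1 - p * rho p (k + j)) := by ring
    _ ≤ p * (rho p k / (1 - 2 * p)) := by
        exact mul_le_mul_of_nonneg_left hsum hp0.le
    _ = p * rho p k / (1 - 2 * p) := by ring
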